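/- Let (M, μ) be a measure space with 0 < μ(M) = V < ∞, let n ≥ 7 be an integer, and let λ, q be real numbers. Let F, G ∈ L²(μ) and W, S be μ-integrable real-valued functions on M with F·W and F·S μ-integrable, such that F ≥ 0 and W ≥ 0 almost everywhere and S ≤ n(n−1)·G almost everywhere. Assume (i) λ·V ≤ n² ∫_M F·G dμ + 2(n+2) ∫_M F·W dμ + ((n²−2n−4)/(2(n−1))) ∫_M F·S dμ + q, and (ii) ∫_M F² dμ ≤ ∫_M F·G dμ − ((n−6)/n) ∫_M F·W dμ. Then λ·V ≤ (1/2) n (n²−4) ∫_M G² dμ + q. -/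

import Mathlib

open MeasureTheory

set_option maxHeartbeats 1600000 in
theorem main_estimate_chain
    {M : Type*} [MeasurableSpace M] (μ : Measure M)
    (n : ℕ) (hn : 7 ≤ n)
    (V lam q : ℝ) (hV0 : 0 < V) (hV : μ Set.univ = ENNReal.ofReal V)
    (F G W S : M → ℝ)
    (hF : MemLp F 2 μ) (hG : MemLp G 2 μ)
    (hW : Integrable W μ) (hS : Integrable S μ)
    (hFW : Integrable (fun x => F x * W x) μ)
    (hFS : Integrable (fun x => F x * S x) μ)
    (hF0 : ∀ᵐ x ∂μ, 0 ≤ F x)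
    (hW0 : ∀ᵐ x ∂μ, 0 ≤ W x)
    (hSle : ∀ᵐ x ∂μ, S x ≤ (n : ℝ) * ((n : ℝ) - 1) * G x)
    (hi : lam * V ≤ (n : ℝ) ^ 2 * (∫ x, F x * G x ∂μ) +
        2 * ((n : ℝ) + 2) * (∫ x, F x * W x ∂μ) +
        (((n : ℝ) ^ 2 - 2 * (n : ℝ) - 4) / (2 * ((n : ℝ) - 1))) *
          (∫ x, F x * S x ∂μ) + q)
    (hii : ∫ x, (F x) ^ 2 ∂μ ≤
        (∫ x, F x * G x ∂μ) - (((n : ℝ) - 6) / (n : ℝ)) * ∫ x, F x * W x ∂μ) :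
    lam * V ≤ (1 / 2 : ℝ) * (n : ℝ) * ((n : ℝ) ^ 2 - 4) * (∫ x, (G x) ^ 2 ∂μ) + q := by
  have hn7 : (7 : ℝ) ≤ (n : ℝ) := by exact_mod_cast hn
  -- integrability facts
  have hF2 : Integrable (fun x => (F x) ^ 2) μ := hF.integrable_sq
  have hG2 : Integrable (fun x => (G x) ^ 2) μ := hG.integrable_sq
  have hFG : Integrable (fun x => F x * G x) μ := by
    refine Integrable.mono' ((hF2.add hG2).div_const 2) (hF.1.mul hG.1) ?_
    refine Filter.Eventually.of_forall fun x => ?_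
    simp only [Pi.add_apply]
    rw [Real.norm_eq_abs, abs_mul]
    nlinarith [sq_nonneg (|F x| - |G x|), sq_abs (F x), sq_abs (G x), abs_nonneg (F x), abs_nonneg (G x)]
  -- notation
  set A := ∫ x, F x * G x ∂μ with hA
  set B := ∫ x, F x * W x ∂μ with hB
  set P := ∫ x, (F x) ^ 2 ∂μ with hP
  set D := ∫ x, (G x) ^ 2 ∂μ with hD
  -- basic sign facts
  have hB0 : 0 ≤ B := by
    refine integral_nonneg_of_ae ?_
    filter_upwards [hF0, hW0] with x h1 h2 using mul_nonneg h1 h2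
  have hP0 : 0 ≤ P := integral_nonneg fun x => sq_nonneg _
  have hD0 : 0 ≤ D := integral_nonneg fun x => sq_nonneg _
  -- step 1 : ∫ F S ≤ n(n-1) A
  have hCS : (∫ x, F x * S x ∂μ) ≤ (n : ℝ) * ((n : ℝ) - 1) * A := by
    have h1 : (∫ x, F x * S x ∂μ) ≤ ∫ x, (n : ℝ) * ((n : ℝ) - 1) * (F x * G x) ∂μ := by
      refine integral_mono_ae hFS (hFG.const_mul _) ?_
      filter_upwards [hF0, hSle] with x h1 h2
      calc F x * S x ≤ F x * ((n : ℝ) * ((n : ℝ) - 1) * G x) :=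
            mul_le_mul_of_nonneg_left h2 h1
        _ = (n : ℝ) * ((n : ℝ) - 1) * (F x * G x) := by ring
    rwa [integral_const_mul] at h1
  -- step 2 : combine with hi
  have hcoef : 0 ≤ ((n : ℝ) ^ 2 - 2 * (n : ℝ) - 4) / (2 * ((n : ℝ) - 1)) := by
    apply div_nonneg <;> nlinarith
  have hstep1 : lam * V ≤ (1 / 2 : ℝ) * (n : ℝ) * ((n : ℝ) ^ 2 - 4) * A +
      2 * ((n : ℝ) + 2) * B + q := by
    have h2 : (((n : ℝ) ^ 2 - 2 * (n : ℝ) - 4) / (2 * ((n : ℝ) - 1))) *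
        (∫ x, F x * S x ∂μ) ≤
        (((n : ℝ) ^ 2 - 2 * (n : ℝ) - 4) / (2 * ((n : ℝ) - 1))) *
          ((n : ℝ) * ((n : ℝ) - 1) * A) := mul_le_mul_of_nonneg_left hCS hcoef
    have hne : (2 : ℝ) * ((n : ℝ) - 1) ≠ 0 := by nlinarith
    have key : (((n : ℝ) ^ 2 - 2 * (n : ℝ) - 4) / (2 * ((n : ℝ) - 1))) *
        ((n : ℝ) * ((n : ℝ) - 1) * A) + (n : ℝ) ^ 2 * A =
        (1 / 2 : ℝ) * (n : ℝ) * ((n : ℝ) ^ 2 - 4) * A := by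
      rw [div_mul_eq_mul_div, div_add' _ _ _ hne, div_eq_iff hne]
      ring
    linarith [hi, h2]
  -- step 3 : Cauchy–Schwarz  A^2 ≤ P * D, from 0 ≤ ∫ (F - t G)^2
  have hCSchwarz : A ^ 2 ≤ P * D := by
    rcases eq_or_lt_of_le hD0 with h | hDpos
    · -- D = 0 : then ∫ G^2 = 0, hence G = 0 a.e., so A = 0
      have hG0 : (fun x => (G x) ^ 2) =ᵐ[μ] 0 := by
        refine (integral_eq_zero_iff_of_nonneg_ae ?_ hG2).mp h.symm
        exact Filter.Eventually.of_forall fun x => sq_nonneg _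
      have hA0 : A = 0 := by
        rw [hA]
        refine integral_eq_zero_of_ae ?_
        filter_upwards [hG0] with x hx
        have : G x = 0 := by
          have := hx
          simp only [Pi.zero_apply] at this
          exact pow_eq_zero_iff (by norm_num) |>.mp this
        simp [this]
      rw [hA0, ← h]
      simp [sq_nonneg]
    · set t := A / D with ht
      have hquad : 0 ≤ P - 2 * t * A + t ^ 2 * D := by
        have hint : 0 ≤ ∫ x, (F x - t * G x) ^ 2 ∂μ :=
          integral_nonneg fun x => sq_nonneg _
        have hexp : (∫ x, (F x - t * G x) ^ 2 ∂μ) = P - 2 * t * A + t ^ 2 * D := by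
          have : (fun x => (F x - t * G x) ^ 2) =
              fun x => (F x) ^ 2 - 2 * t * (F x * G x) + t ^ 2 * (G x) ^ 2 := by
            funext x; ring
          rw [this, integral_add (by exact (hF2.sub (hFG.const_mul _))) (hG2.const_mul _),
            integral_sub hF2 (hFG.const_mul _), integral_const_mul, integral_const_mul]
        linarith [hexp ▸ hint]
      have : P - 2 * t * A + t ^ 2 * D = P - A ^ 2 / D := by
        rw [ht]; field_simp; ring
      rw [this] at hquad
      calc A ^ 2 = A ^ 2 / D * D := by field_simp
        _ ≤ P * D := mul_le_mul_of_nonneg_right (by linarith) hD0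
  -- step 4 : algebra. From hii : P ≤ A - ((n-6)/n) B.
  have hnpos : (0 : ℝ) < (n : ℝ) := by linarith
  have hii' : P ≤ A - ((n : ℝ) - 6) / (n : ℝ) * B := hii
  have hkey : (1 / 2 : ℝ) * (n : ℝ) * ((n : ℝ) ^ 2 - 4) * A + 2 * ((n : ℝ) + 2) * B ≤
      (1 / 2 : ℝ) * (n : ℝ) * ((n : ℝ) ^ 2 - 4) * D := by
    have hBle : ((n : ℝ) - 6) / (n : ℝ) * B ≤ A := by linarith
    have hBn : 0 ≤ ((n : ℝ) - 6) / (n : ℝ) * B :=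
      mul_nonneg (div_nonneg (by linarith) hnpos.le) hB0
    have hA0 : 0 ≤ A := le_trans hBn hBle
    -- A^2 ≤ P D ≤ (A - ((n-6)/n) B) D
    have h1 : A ^ 2 ≤ (A - ((n : ℝ) - 6) / (n : ℝ) * B) * D :=
      le_trans hCSchwarz (mul_le_mul_of_nonneg_right hii' hD0)
    rcases eq_or_lt_of_le hA0 with hAz | hApos
    · -- A = 0 ⇒ B = 0 (since ((n-6)/n) B ≤ A = 0 and B ≥ 0)
      have hB0' : B = 0 := by
        have h6 : 0 < ((n : ℝ) - 6) / (n : ℝ) := div_pos (by linarith) hnpos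
        by_contra hne'
        have hBpos : 0 < B := lt_of_le_of_ne hB0 (Ne.symm hne')
        have := mul_pos h6 hBpos
        linarith
      rw [← hAz, hB0']
      have : (0 : ℝ) ≤ (1 / 2 : ℝ) * (n : ℝ) * ((n : ℝ) ^ 2 - 4) * D := by
        apply mul_nonneg _ hD0
        nlinarith
      linarith
    · -- A > 0 : then A ≤ D, and A (D - A) ≥ ((n-6)/n) B D ≥ ((n-6)/n) B A
      have hAD : A ≤ D := by nlinarith [h1, mul_nonneg hBn hD0, hApos]
      have h2 : A * (D - A) ≥ ((n : ℝ) - 6) / (n : ℝ) * B * D := by nlinarith [h1]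
      have h3 : ((n : ℝ) - 6) / (n : ℝ) * B * D ≥ ((n : ℝ) - 6) / (n : ℝ) * B * A := by
        apply mul_le_mul_of_nonneg_left hAD hBn
      have h4 : D - A ≥ ((n : ℝ) - 6) / (n : ℝ) * B := by
        nlinarith [h2, h3, hApos]
      -- multiply by n(n²-4)/2 and compare coefficients
      have h5 : (1 / 2 : ℝ) * (n : ℝ) * ((n : ℝ) ^ 2 - 4) * (D - A) ≥
          (1 / 2 : ℝ) * (n : ℝ) * ((n : ℝ) ^ 2 - 4) * (((n : ℝ) - 6) / (n : ℝ) * B) := by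
        apply mul_le_mul_of_nonneg_left h4
        nlinarith
      have h6 : (1 / 2 : ℝ) * (n : ℝ) * ((n : ℝ) ^ 2 - 4) * (((n : ℝ) - 6) / (n : ℝ) * B) ≥
          2 * ((n : ℝ) + 2) * B := by
        have hexpand : (1 / 2 : ℝ) * (n : ℝ) * ((n : ℝ) ^ 2 - 4) * (((n : ℝ) - 6) / (n : ℝ) * B) =
            (1 / 2 : ℝ) * (((n : ℝ) ^ 2 - 4) * ((n : ℝ) - 6)) * B := by
          field_simp
        rw [hexpand]
        have hc : 2 * ((n : ℝ) + 2) ≤ (1 / 2 : ℝ) * (((n : ℝ) ^ 2 - 4) * ((n : ℝ) - 6)) := by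
          nlinarith
        exact mul_le_mul_of_nonneg_right hc hB0
      linarith
  linarith
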